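/- In the field of formal Laurent series over ℚ in the variable X, define: Θ = ∑_{n∈ℤ} X^{n²}; E = 1 − 264·∑_{n≥1} σ₉(n) X^{4n}, where σ₉(n) is the sum of the 9th powers of the positive divisors of n; P = X⁴ · ∏_{n≥1} (1 − X^{4n})²⁴, the infinite product taken in the X-adic topology on ℚ[[X]]; and let D be the derivation sending ∑ aₙXⁿ to ∑ n·aₙXⁿ. Then P is invertible, and the Laurent series f = −(1/20)·( ( (1/2)·Θ·(D E) − 10·E·(D Θ) )·P⁻¹ + 608·Θ ) satisfies: its coefficient of Xⁿ vanishes for all n < −3 and for all n with −3 ≤ n ≤ 16 and n ≡ 2 or 3 (mod 4), and its coefficients of X⁻³, X⁰, X¹, X⁴, X⁵, X⁸, X⁹, X¹², X¹³, X¹⁶ are respectively 1, 0, −248, 26752, −85995, 1707264, −4096248, 44330496, −91951146, 708938752. -/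

import Mathlib

noncomputable section

/-- The product (coefficientwise) topology on `ℚ[[X]]`; since `ℚ` is discrete this
coincides with the `X`-adic topology. -/
instance : TopologicalSpace (PowerSeries ℚ) :=
  @Pi.topologicalSpace (Unit →₀ ℕ) (fun _ => ℚ) (fun _ => ⊥)

open PowerSeries

/-- `Θ = ∑_{n ∈ ℤ} X^{n²}`. -/
def Theta : PowerSeries ℚ := ∑' n : ℤ, (X : PowerSeries ℚ) ^ (n.natAbs ^ 2)

/-- `E = 1 - 264 ∑_{n ≥ 1} σ₉(n) X^{4n}`, where `σ₉(n)` is the sum of the 9th powers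
of the positive divisors of `n`. -/
def Eseries : PowerSeries ℚ :=
  1 - 264 * ∑' n : ℕ, ((∑ d ∈ (n + 1).divisors, d ^ 9 : ℕ) : ℚ) •
      (X : PowerSeries ℚ) ^ (4 * (n + 1))

/-- `P = X⁴ ∏_{n ≥ 1} (1 - X^{4n})²⁴`, the infinite product taken in the topology
above. -/
def Pseries : PowerSeries ℚ :=
  X ^ 4 * ∏' n : ℕ, (1 - (X : PowerSeries ℚ) ^ (4 * (n + 1))) ^ 24

/-- The ring embedding of `ℚ[[X]]` into the field of formal Laurent series `ℚ((X))`. -/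
def toLaurent : PowerSeries ℚ →+* LaurentSeries ℚ := HahnSeries.ofPowerSeries ℤ ℚ

/-- The derivation `D(∑ aₙ Xⁿ) = ∑ n aₙ Xⁿ` on Laurent series. -/
def Dop (f : LaurentSeries ℚ) : LaurentSeries ℚ :=
  ⟨fun n => (n : ℚ) * f.coeff n,
    f.isPWO_support.mono (by
      intro n hn
      simp only [Function.mem_support, ne_eq] at hn ⊢
      exact fun h => hn (by rw [h, mul_zero]))⟩

/-- The Laurent series
`f = -(1/20) (((1/2) Θ (DE) - 10 E (DΘ)) P⁻¹ + 608 Θ)`,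
i.e. Zagier's weight one-half form `f₃`, as a formal Laurent series. -/
def fThree : LaurentSeries ℚ :=
  -(1 / 20 : LaurentSeries ℚ) *
    (((1 / 2 : LaurentSeries ℚ) * toLaurent Theta * Dop (toLaurent Eseries) -
        10 * toLaurent Eseries * Dop (toLaurent Theta)) * (toLaurent Pseries)⁻¹ +
      608 * toLaurent Theta)



set_option maxHeartbeats 1600000
set_option maxRecDepth 8000

instance : T2Space (PowerSeries ℚ) :=
  @Pi.t2Space (Unit →₀ ℕ) (fun _ => ℚ) (fun _ => ⊥)
    (fun _ => @DiscreteTopology.toT2Space ℚ ⊥ (@DiscreteTopology.mk ℚ ⊥ rfl))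

open Filter Finset in
lemma hasSum_of_coeff {ι : Type} (f : ι → PowerSeries ℚ) (a : PowerSeries ℚ)
    (h : ∀ k : ℕ, @HasSum ℚ ι _ ⊥ (fun i => coeff k (f i)) (coeff k a) (SummationFilter.unconditional ι)) :
    HasSum f a := by
  have key : ∀ d : Unit →₀ ℕ, @HasSum ℚ ι _ ⊥ (fun i => MvPowerSeries.coeff d (f i))
      (MvPowerSeries.coeff d a) (SummationFilter.unconditional ι) := by
    intro d
    have hd : d = Finsupp.single () (d ()) := Finsupp.unique_single d
    rw [hd]
    exact h (d ())
  rw [HasSum]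
  set F : Finset ι → PowerSeries ℚ := fun s => ∑ i ∈ s, f i with hF
  refine (@tendsto_pi_nhds (Finset ι) (Unit →₀ ℕ) (fun _ => ℚ) (fun _ => ⊥) F a atTop).mpr ?_
  intro d
  have : (fun s : Finset ι => F s d) =
      fun s : Finset ι => ∑ i ∈ s, MvPowerSeries.coeff d (f i) := by
    funext s
    exact map_sum (MvPowerSeries.coeff d) f s
  rw [show (fun s : Finset ι => F s d) = _ from this]
  exact key d

lemma tendsto_bot_of_eventually {α : Type} {l : Filter α} {g : α → ℚ} {c : ℚ}
    (h : ∀ᶠ s in l, g s = c) : @Filter.Tendsto α ℚ g l (@nhds ℚ ⊥ c) := by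
  rw [show (@nhds ℚ ⊥) = pure from @nhds_discrete ℚ ⊥ (@DiscreteTopology.mk ℚ ⊥ rfl)]
  exact Filter.tendsto_pure.mpr h

open Filter Finset in
lemma hasProd_of_coeff (f : ℕ → PowerSeries ℚ) (a : PowerSeries ℚ)
    (h : ∀ k : ℕ, ∃ m : ℕ, ∀ s : Finset ℕ, Finset.range m ⊆ s →
      coeff k (∏ i ∈ s, f i) = coeff k a) :
    HasProd f a := by
  have key : ∀ d : Unit →₀ ℕ, ∃ m : ℕ, ∀ s : Finset ℕ, Finset.range m ⊆ s →
      MvPowerSeries.coeff d (∏ i ∈ s, f i) = MvPowerSeries.coeff d a := by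
    intro d
    have hd : d = Finsupp.single () (d ()) := Finsupp.unique_single d
    rw [hd]
    exact h (d ())
  rw [HasProd]
  set F : Finset ℕ → PowerSeries ℚ := fun s => ∏ i ∈ s, f i with hF
  refine (@tendsto_pi_nhds (Finset ℕ) (Unit →₀ ℕ) (fun _ => ℚ) (fun _ => ⊥) F a atTop).mpr ?_
  intro d
  obtain ⟨m, hm⟩ := key d
  refine tendsto_bot_of_eventually ?_
  refine Filter.eventually_atTop.2 ⟨Finset.range m, fun s hs => ?_⟩
  exact hm s (Finset.le_iff_subset.mp hs)


-- discrete HasSum helpers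
lemma Q_hasSum_single {ι : Type} (g : ι → ℚ) (i : ι) (h : ∀ j, j ≠ i → g j = 0) :
    @HasSum ℚ ι _ ⊥ g (g i) (SummationFilter.unconditional ι) := by
  letI : TopologicalSpace ℚ := ⊥
  exact hasSum_single i h

lemma Q_hasSum_pair {ι : Type} [DecidableEq ι] (g : ι → ℚ) (i j : ι) (hij : i ≠ j)
    (h : ∀ l, l ≠ i → l ≠ j → g l = 0) :
    @HasSum ℚ ι _ ⊥ g (g i + g j) (SummationFilter.unconditional ι) := by
  letI : TopologicalSpace ℚ := ⊥
  have := hasSum_sum_of_ne_finset_zero (L := SummationFilter.unconditional ι) (f := g) (s := {i, j})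
    (fun b hb => h b (fun e => hb (by simp [e])) (fun e => hb (by simp [e])))
  rwa [Finset.sum_pair hij] at this

lemma Q_hasSum_zero {ι : Type} (g : ι → ℚ) (h : ∀ i, g i = 0) :
    @HasSum ℚ ι _ ⊥ g 0 (SummationFilter.unconditional ι) := by
  have : g = fun _ => (0 : ℚ) := funext h
  rw [this]
  letI : TopologicalSpace ℚ := ⊥
  exact hasSum_zero

def thetaF (k : ℕ) : ℚ :=
  if k ∈ (Finset.range (k + 1)).image (fun n => n * n) then (if k = 0 then 1 else 2) else 0

lemma theta_hasSum : HasSum (fun n : ℤ => (X : PowerSeries ℚ) ^ (n.natAbs ^ 2))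
    (PowerSeries.mk thetaF) := by
  apply hasSum_of_coeff
  intro k
  rw [coeff_mk]
  have hco : (fun n : ℤ => coeff k ((X : PowerSeries ℚ) ^ (n.natAbs ^ 2))) =
      fun n : ℤ => if k = n.natAbs ^ 2 then (1 : ℚ) else 0 := by
    funext n; exact coeff_X_pow k (n.natAbs ^ 2)
  rw [hco]
  by_cases hsq : k ∈ (Finset.range (k + 1)).image (fun n => n * n)
  · obtain ⟨s, _, hs2⟩ := Finset.mem_image.mp hsq
    by_cases hk : k = 0
    · subst hk
      have h0 : ∀ j : ℤ, j ≠ 0 → (if 0 = j.natAbs ^ 2 then (1 : ℚ) else 0) = 0 := by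
        intro j hj
        rw [if_neg]
        intro h
        exact hj (Int.natAbs_eq_zero.mp ((pow_eq_zero_iff (two_ne_zero)).mp h.symm))
      have := Q_hasSum_single (fun n : ℤ => if 0 = n.natAbs ^ 2 then (1 : ℚ) else 0) 0 h0
      simpa [thetaF] using this
    · have hs0 : s ≠ 0 := by rintro rfl; exact hk hs2.symm
      have hkk : k = s ^ 2 := by rw [← hs2]; ring
      have hne : (s : ℤ) ≠ (-s : ℤ) := by
        simp only [ne_eq, neg_eq_iff_add_eq_zero]
        omega
      have hz : ∀ l : ℤ, l ≠ (s : ℤ) → l ≠ (-s : ℤ) →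
          (if k = l.natAbs ^ 2 then (1 : ℚ) else 0) = 0 := by
        intro l h1 h2
        rw [if_neg]
        intro h
        have : l.natAbs = s := by
          have := h.symm.trans hkk
          exact Nat.pow_left_injective (by norm_num) this
        rcases Int.natAbs_eq l with e | e <;> rw [e, this] at h1 h2
        · exact h1 rfl
        · exact h2 rfl
      have hsum := Q_hasSum_pair (fun n : ℤ => if k = n.natAbs ^ 2 then (1 : ℚ) else 0)
        (s : ℤ) (-s : ℤ) hne hz
      have hv : (if k = ((s : ℤ)).natAbs ^ 2 then (1 : ℚ) else 0) = 1 :=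
        if_pos (by rw [Int.natAbs_natCast]; exact hkk)
      have hv2 : (if k = ((-(s : ℤ))).natAbs ^ 2 then (1 : ℚ) else 0) = 1 :=
        if_pos (by rw [Int.natAbs_neg, Int.natAbs_natCast]; exact hkk)
      rw [hv, hv2] at hsum
      have ht : thetaF k = 2 := by
        rw [thetaF, if_pos hsq, if_neg hk]
      rw [ht, show (2 : ℚ) = 1 + 1 by norm_num]
      exact hsum
  · have hz : ∀ l : ℤ, (if k = l.natAbs ^ 2 then (1 : ℚ) else 0) = 0 := by
      intro l
      rw [if_neg]
      intro h
      apply hsq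
      refine Finset.mem_image.mpr ⟨l.natAbs, Finset.mem_range.mpr ?_, by rw [h]; ring⟩
      have : l.natAbs ≤ l.natAbs ^ 2 := Nat.le_self_pow (by norm_num) _
      omega
    have ht : thetaF k = 0 := by rw [thetaF, if_neg hsq]
    rw [ht]
    exact Q_hasSum_zero _ hz

def sigF (k : ℕ) : ℚ :=
  if k % 4 = 0 ∧ k ≠ 0 then ((∑ d ∈ (k / 4).divisors, d ^ 9 : ℕ) : ℚ) else 0

def eF (k : ℕ) : ℚ := (if k = 0 then 1 else 0) - 264 * sigF k

lemma sig_hasSum : HasSum (fun n : ℕ => ((∑ d ∈ (n + 1).divisors, d ^ 9 : ℕ) : ℚ) •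
    (X : PowerSeries ℚ) ^ (4 * (n + 1))) (PowerSeries.mk sigF) := by
  apply hasSum_of_coeff
  intro k
  rw [coeff_mk]
  have hco : (fun n : ℕ => coeff k (((∑ d ∈ (n + 1).divisors, d ^ 9 : ℕ) : ℚ) •
      (X : PowerSeries ℚ) ^ (4 * (n + 1)))) =
      fun n : ℕ => if k = 4 * (n + 1) then ((∑ d ∈ (n + 1).divisors, d ^ 9 : ℕ) : ℚ) else 0 := by
    funext n
    rw [map_smul, smul_eq_mul, coeff_X_pow]
    split_ifs <;> ring
  rw [hco]
  by_cases h4 : k % 4 = 0 ∧ k ≠ 0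
  · have hk : k = 4 * ((k / 4 - 1) + 1) := by omega
    have := Q_hasSum_single
      (fun n : ℕ => if k = 4 * (n + 1) then ((∑ d ∈ (n + 1).divisors, d ^ 9 : ℕ) : ℚ) else 0)
      (k / 4 - 1) (fun j hj => if_neg (by omega))
    rw [if_pos hk] at this
    have e : k / 4 - 1 + 1 = k / 4 := by omega
    have hs : sigF k = ((∑ d ∈ (k / 4 - 1 + 1).divisors, d ^ 9 : ℕ) : ℚ) := by
      rw [sigF, if_pos h4, e]
    rw [hs]
    exact this
  · have ht : sigF k = 0 := by rw [sigF, if_neg h4]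
    rw [ht]
    exact Q_hasSum_zero _ (fun n => if_neg (by omega))

lemma theta_eq : Theta = PowerSeries.mk thetaF := theta_hasSum.tsum_eq

lemma Es_eq : Eseries = PowerSeries.mk eF := by
  rw [Eseries, sig_hasSum.tsum_eq]
  ext k
  rw [coeff_mk, eF, map_sub, coeff_one]
  rw [show (264 : PowerSeries ℚ) = C 264 from (map_ofNat (C (R := ℚ)) 264).symm, coeff_C_mul, coeff_mk]


-- ### the product
def pf (n : ℕ) : PowerSeries ℚ := (1 - (X : PowerSeries ℚ) ^ (4 * (n + 1))) ^ 24

def QP : PowerSeries ℚ := PowerSeries.mk fun k => coeff k (∏ n ∈ Finset.range (k + 1), pf n)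

lemma tail_one {m : ℕ} (t : Finset ℕ) (ht : ∀ i ∈ t, m ≤ i) :
    (X : PowerSeries ℚ) ^ (4 * m + 4) ∣ (∏ i ∈ t, pf i) - 1 := by
  induction t using Finset.cons_induction with
  | empty => simp
  | cons a t ha ih =>
    rw [Finset.prod_cons]
    have h1 : (X : PowerSeries ℚ) ^ (4 * m + 4) ∣ pf a - 1 := by
      have h2 : (X : PowerSeries ℚ) ^ (4 * (a + 1)) ∣ pf a - 1 := by
        have h3 := sub_dvd_pow_sub_pow (1 - (X : PowerSeries ℚ) ^ (4 * (a + 1))) 1 24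
        rw [one_pow] at h3
        have h4 : (1 - (X : PowerSeries ℚ) ^ (4 * (a + 1))) - 1 = -(X ^ (4 * (a + 1))) := by ring
        rw [h4, neg_dvd] at h3
        exact h3
      exact dvd_trans (pow_dvd_pow X (by
        have := ht a (Finset.mem_cons_self a t)
        omega)) h2
    have h2 := ih (fun i hi => ht i (Finset.mem_cons.mpr (Or.inr hi)))
    have key : pf a * (∏ i ∈ t, pf i) - 1 =
        pf a * ((∏ i ∈ t, pf i) - 1) + (pf a - 1) := by ring
    rw [key]
    exact dvd_add (Dvd.dvd.mul_left h2 _) h1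

lemma stab (k m : ℕ) (hk : k < 4 * m + 4) (s : Finset ℕ) (hs : Finset.range m ⊆ s) :
    coeff k (∏ i ∈ s, pf i) = coeff k (∏ i ∈ Finset.range m, pf i) := by
  have hsplit : (∏ i ∈ s, pf i) =
      (∏ i ∈ Finset.range m, pf i) * ∏ i ∈ s \ Finset.range m, pf i := by
    rw [mul_comm, Finset.prod_sdiff hs]
  have hdvd : (X : PowerSeries ℚ) ^ (4 * m + 4) ∣
      (∏ i ∈ s, pf i) - (∏ i ∈ Finset.range m, pf i) := by
    rw [hsplit, show (∏ i ∈ Finset.range m, pf i) * (∏ i ∈ s \ Finset.range m, pf i) -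
        (∏ i ∈ Finset.range m, pf i) =
        (∏ i ∈ Finset.range m, pf i) * ((∏ i ∈ s \ Finset.range m, pf i) - 1) by ring]
    exact Dvd.dvd.mul_left (tail_one _ (fun i hi => by
      have := (Finset.mem_sdiff.mp hi).2
      simpa using Nat.le_of_not_lt (fun hlt => this (Finset.mem_range.mpr hlt)))) _
  have h0 := X_pow_dvd_iff.mp hdvd k hk
  rw [map_sub, sub_eq_zero] at h0
  exact h0

lemma QP_hasProd : HasProd pf QP := by
  apply hasProd_of_coeff
  intro k
  refine ⟨k + 1, fun s hs => ?_⟩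
  rw [show coeff k QP = coeff k (∏ n ∈ Finset.range (k + 1), pf n) from coeff_mk k _]
  exact stab k (k + 1) (by omega) s hs

lemma Ps_eq : Pseries = X ^ 4 * QP := by
  have h : HasProd (fun n : ℕ => (1 - (X : PowerSeries ℚ) ^ (4 * (n + 1))) ^ 24) QP := QP_hasProd
  rw [Pseries, h.tprod_eq]

lemma QP_const : constantCoeff QP = 1 := by
  have h1 : coeff 0 QP = coeff 0 ((1 - (X : PowerSeries ℚ) ^ (4 * (0 + 1))) ^ 24) := by
    rw [show coeff 0 QP = coeff 0 (∏ n ∈ Finset.range 1, pf n) from coeff_mk 0 _,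
      Finset.prod_range_one, pf]
  rw [← coeff_zero_eq_constantCoeff, h1, coeff_zero_eq_constantCoeff]
  simp

lemma QP_mul_inv : QP * QP⁻¹ = 1 :=
  PowerSeries.mul_inv_cancel _ (by rw [QP_const]; exact one_ne_zero)

-- ### Laurent glue
lemma toLaurent_coeff_nonneg (g : PowerSeries ℚ) (n : ℕ) :
    (toLaurent g).coeff (n : ℤ) = coeff n g :=
  HahnSeries.ofPowerSeries_apply_coeff g n

lemma toLaurent_coeff_neg (g : PowerSeries ℚ) (n : ℤ) (h : n < 0) :
    (toLaurent g).coeff n = 0 := by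
  rw [toLaurent, HahnSeries.ofPowerSeries_apply, HahnSeries.embDomain_notin_range]
  rintro ⟨m, hm⟩
  replace hm : (m : ℤ) = n := hm
  omega

lemma DopT (g : PowerSeries ℚ) :
    Dop (toLaurent g) = toLaurent (PowerSeries.mk fun n => (n : ℚ) * coeff n g) := by
  ext n
  show (n : ℚ) * (toLaurent g).coeff n = _
  by_cases h : 0 ≤ n
  · obtain ⟨m, rfl⟩ := Int.eq_ofNat_of_zero_le h
    rw [toLaurent_coeff_nonneg, toLaurent_coeff_nonneg, coeff_mk]
    norm_num
  · rw [toLaurent_coeff_neg g n (by omega), toLaurent_coeff_neg _ n (by omega), mul_zero]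

-- ### scalars
lemma scalar_half : (1 / 2 : LaurentSeries ℚ) = toLaurent (C (1 / 2)) := by
  have h : (2 : LaurentSeries ℚ) * toLaurent (C (1 / 2)) = 1 := by
    rw [show (2 : LaurentSeries ℚ) = toLaurent 2 from (map_ofNat toLaurent 2).symm, ← map_mul]
    rw [show (2 : PowerSeries ℚ) * C (1 / 2) = 1 by
      rw [show (2 : PowerSeries ℚ) = C 2 from (map_ofNat (C (R := ℚ)) 2).symm, ← map_mul]
      norm_num]
    exact map_one toLaurent
  exact (eq_one_div_of_mul_eq_one_right h).symm -- check

lemma scalar_m20 : -(1 / 20 : LaurentSeries ℚ) = toLaurent (C (-(1 / 20))) := by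
  have h : (20 : LaurentSeries ℚ) * toLaurent (C (1 / 20)) = 1 := by
    rw [show (20 : LaurentSeries ℚ) = toLaurent 20 from (map_ofNat toLaurent 20).symm, ← map_mul]
    rw [show (20 : PowerSeries ℚ) * C (1 / 20) = 1 by
      rw [show (20 : PowerSeries ℚ) = C 20 from (map_ofNat (C (R := ℚ)) 20).symm, ← map_mul]
      norm_num]
    exact map_one toLaurent
  have h2 : toLaurent (C (1 / 20)) = 1 / 20 := eq_one_div_of_mul_eq_one_right h
  rw [show C (R := ℚ) (-(1 / 20)) = -(C (R := ℚ) (1 / 20)) from map_neg (C (R := ℚ)) _, map_neg, h2]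

-- ### inverse of P
lemma P_unit_eq : toLaurent Pseries * (toLaurent QP⁻¹ * HahnSeries.single (-4 : ℤ) (1 : ℚ)) = 1 := by
  have h1 : toLaurent Pseries * (toLaurent QP⁻¹ * HahnSeries.single (-4 : ℤ) (1 : ℚ)) =
      (HahnSeries.single (4 : ℤ) (1 : ℚ) * HahnSeries.single (-4 : ℤ) (1 : ℚ)) *
        toLaurent (QP * QP⁻¹) := by
    rw [Ps_eq, map_mul, map_mul,
      show toLaurent (X ^ 4) = HahnSeries.single (4 : ℤ) (1 : ℚ) from
        HahnSeries.ofPowerSeries_X_pow 4]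
    ring
  rw [h1, QP_mul_inv, HahnSeries.single_mul_single,
    show (4 : ℤ) + -4 = 0 from by norm_num, show (1 : ℚ) * 1 = 1 from mul_one 1,
    HahnSeries.single_zero_one, one_mul]
  exact map_one toLaurent

lemma P_isUnit : IsUnit (toLaurent Pseries) := IsUnit.of_mul_eq_one _ P_unit_eq

lemma P_inv_eq : (toLaurent Pseries)⁻¹ = toLaurent QP⁻¹ * HahnSeries.single (-4 : ℤ) (1 : ℚ) :=
  (inv_eq_of_mul_eq_one_right P_unit_eq)


def Tp : PowerSeries ℚ := 1 + C 2 * X + C 2 * X ^ 4 + C 2 * X ^ 9 + C 2 * X ^ 16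
def Tpp : PowerSeries ℚ := C 2 * X + C 8 * X ^ 4 + C 18 * X ^ 9 + C 32 * X ^ 16
def Epp : PowerSeries ℚ := 1 - C 264 * X ^ 4 - C 135432 * X ^ 8 - C 5196576 * X ^ 12 - C 69341448 * X ^ 16 - C 515625264 * X ^ 20
def Ehp : PowerSeries ℚ := -C 528 * X ^ 4 - C 541728 * X ^ 8 - C 31179456 * X ^ 12 - C 554731584 * X ^ 16 - C 5156252640 * X ^ 20
def Qpolyp : PowerSeries ℚ := 1 - C 24 * X ^ 4 + C 252 * X ^ 8 - C 1472 * X ^ 12 + C 4830 * X ^ 16 - C 6048 * X ^ 20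
def Rc : PowerSeries ℚ := -C 20 * X - C 608 * X ^ 4 + C 3744 * X ^ 5 - C 536256 * X ^ 8 + C 1719900 * X ^ 9 - C 34145280 * X ^ 12 + C 81923744 * X ^ 13 - C 886609920 * X ^ 16 + C 1839022920 * X ^ 17 - C 14178776256 * X ^ 20

lemma thetaF_0 : thetaF 0 = 1 := by rw [thetaF, if_pos (by decide), if_pos rfl]
lemma thetaF_1 : thetaF 1 = 2 := by rw [thetaF, if_pos (by decide), if_neg (by decide)]
lemma thetaF_2 : thetaF 2 = 0 := by rw [thetaF, if_neg (by decide)]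
lemma thetaF_3 : thetaF 3 = 0 := by rw [thetaF, if_neg (by decide)]
lemma thetaF_4 : thetaF 4 = 2 := by rw [thetaF, if_pos (by decide), if_neg (by decide)]
lemma thetaF_5 : thetaF 5 = 0 := by rw [thetaF, if_neg (by decide)]
lemma thetaF_6 : thetaF 6 = 0 := by rw [thetaF, if_neg (by decide)]
lemma thetaF_7 : thetaF 7 = 0 := by rw [thetaF, if_neg (by decide)]
lemma thetaF_8 : thetaF 8 = 0 := by rw [thetaF, if_neg (by decide)]
lemma thetaF_9 : thetaF 9 = 2 := by rw [thetaF, if_pos (by decide), if_neg (by decide)]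
lemma thetaF_10 : thetaF 10 = 0 := by rw [thetaF, if_neg (by decide)]
lemma thetaF_11 : thetaF 11 = 0 := by rw [thetaF, if_neg (by decide)]
lemma thetaF_12 : thetaF 12 = 0 := by rw [thetaF, if_neg (by decide)]
lemma thetaF_13 : thetaF 13 = 0 := by rw [thetaF, if_neg (by decide)]
lemma thetaF_14 : thetaF 14 = 0 := by rw [thetaF, if_neg (by decide)]
lemma thetaF_15 : thetaF 15 = 0 := by rw [thetaF, if_neg (by decide)]
lemma thetaF_16 : thetaF 16 = 2 := by rw [thetaF, if_pos (by decide), if_neg (by decide)]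
lemma thetaF_17 : thetaF 17 = 0 := by rw [thetaF, if_neg (by decide)]
lemma thetaF_18 : thetaF 18 = 0 := by rw [thetaF, if_neg (by decide)]
lemma thetaF_19 : thetaF 19 = 0 := by rw [thetaF, if_neg (by decide)]
lemma thetaF_20 : thetaF 20 = 0 := by rw [thetaF, if_neg (by decide)]

lemma eF_0 : eF 0 = 1 := by rw [eF, sigF, if_neg (show ¬(0 % 4 = 0 ∧ 0 ≠ 0) by decide)]; norm_num
lemma eF_1 : eF 1 = 0 := by rw [eF, sigF, if_neg (show ¬(1 % 4 = 0 ∧ 1 ≠ 0) by decide)]; norm_num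
lemma eF_2 : eF 2 = 0 := by rw [eF, sigF, if_neg (show ¬(2 % 4 = 0 ∧ 2 ≠ 0) by decide)]; norm_num
lemma eF_3 : eF 3 = 0 := by rw [eF, sigF, if_neg (show ¬(3 % 4 = 0 ∧ 3 ≠ 0) by decide)]; norm_num
lemma eF_4 : eF 4 = -264 := by
  have h : (∑ d ∈ (4 / 4 : ℕ).divisors, d ^ 9) = 1 := by decide
  rw [eF, sigF, if_pos (show 4 % 4 = 0 ∧ 4 ≠ 0 by decide), h]; norm_num
lemma eF_5 : eF 5 = 0 := by rw [eF, sigF, if_neg (show ¬(5 % 4 = 0 ∧ 5 ≠ 0) by decide)]; norm_num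
lemma eF_6 : eF 6 = 0 := by rw [eF, sigF, if_neg (show ¬(6 % 4 = 0 ∧ 6 ≠ 0) by decide)]; norm_num
lemma eF_7 : eF 7 = 0 := by rw [eF, sigF, if_neg (show ¬(7 % 4 = 0 ∧ 7 ≠ 0) by decide)]; norm_num
lemma eF_8 : eF 8 = -135432 := by
  have h : (∑ d ∈ (8 / 4 : ℕ).divisors, d ^ 9) = 513 := by decide
  rw [eF, sigF, if_pos (show 8 % 4 = 0 ∧ 8 ≠ 0 by decide), h]; norm_num
lemma eF_9 : eF 9 = 0 := by rw [eF, sigF, if_neg (show ¬(9 % 4 = 0 ∧ 9 ≠ 0) by decide)]; norm_num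
lemma eF_10 : eF 10 = 0 := by rw [eF, sigF, if_neg (show ¬(10 % 4 = 0 ∧ 10 ≠ 0) by decide)]; norm_num
lemma eF_11 : eF 11 = 0 := by rw [eF, sigF, if_neg (show ¬(11 % 4 = 0 ∧ 11 ≠ 0) by decide)]; norm_num
lemma eF_12 : eF 12 = -5196576 := by
  have h : (∑ d ∈ (12 / 4 : ℕ).divisors, d ^ 9) = 19684 := by decide
  rw [eF, sigF, if_pos (show 12 % 4 = 0 ∧ 12 ≠ 0 by decide), h]; norm_num
lemma eF_13 : eF 13 = 0 := by rw [eF, sigF, if_neg (show ¬(13 % 4 = 0 ∧ 13 ≠ 0) by decide)]; norm_num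
lemma eF_14 : eF 14 = 0 := by rw [eF, sigF, if_neg (show ¬(14 % 4 = 0 ∧ 14 ≠ 0) by decide)]; norm_num
lemma eF_15 : eF 15 = 0 := by rw [eF, sigF, if_neg (show ¬(15 % 4 = 0 ∧ 15 ≠ 0) by decide)]; norm_num
lemma eF_16 : eF 16 = -69341448 := by
  have h : (∑ d ∈ (16 / 4 : ℕ).divisors, d ^ 9) = 262657 := by decide
  rw [eF, sigF, if_pos (show 16 % 4 = 0 ∧ 16 ≠ 0 by decide), h]; norm_num
lemma eF_17 : eF 17 = 0 := by rw [eF, sigF, if_neg (show ¬(17 % 4 = 0 ∧ 17 ≠ 0) by decide)]; norm_num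
lemma eF_18 : eF 18 = 0 := by rw [eF, sigF, if_neg (show ¬(18 % 4 = 0 ∧ 18 ≠ 0) by decide)]; norm_num
lemma eF_19 : eF 19 = 0 := by rw [eF, sigF, if_neg (show ¬(19 % 4 = 0 ∧ 19 ≠ 0) by decide)]; norm_num
lemma eF_20 : eF 20 = -515625264 := by
  have h : (∑ d ∈ (20 / 4 : ℕ).divisors, d ^ 9) = 1953126 := by decide
  rw [eF, sigF, if_pos (show 20 % 4 = 0 ∧ 20 ≠ 0 by decide), h]; norm_num

lemma d1 : (X : PowerSeries ℚ) ^ 21 ∣ PowerSeries.mk thetaF - Tp := by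
  rw [X_pow_dvd_iff]
  intro m hm
  rw [map_sub, coeff_mk, sub_eq_zero]
  interval_cases m <;>
    simp [thetaF_0, thetaF_1, thetaF_2, thetaF_3, thetaF_4, thetaF_5, thetaF_6, thetaF_7, thetaF_8, thetaF_9, thetaF_10, thetaF_11, thetaF_12, thetaF_13, thetaF_14, thetaF_15, thetaF_16, thetaF_17, thetaF_18, thetaF_19, thetaF_20, Tp, coeff_C_mul, coeff_X_pow, PowerSeries.coeff_X, coeff_one]
lemma d2 : (X : PowerSeries ℚ) ^ 21 ∣ (PowerSeries.mk fun n => (n : ℚ) * thetaF n) - Tpp := by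
  rw [X_pow_dvd_iff]
  intro m hm
  rw [map_sub, coeff_mk, sub_eq_zero]
  interval_cases m <;>
    simp [thetaF_0, thetaF_1, thetaF_2, thetaF_3, thetaF_4, thetaF_5, thetaF_6, thetaF_7, thetaF_8, thetaF_9, thetaF_10, thetaF_11, thetaF_12, thetaF_13, thetaF_14, thetaF_15, thetaF_16, thetaF_17, thetaF_18, thetaF_19, thetaF_20, Tpp, coeff_C_mul, coeff_X_pow, PowerSeries.coeff_X, coeff_one] <;> norm_num
lemma d3 : (X : PowerSeries ℚ) ^ 21 ∣ PowerSeries.mk eF - Epp := by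
  rw [X_pow_dvd_iff]
  intro m hm
  rw [map_sub, coeff_mk, sub_eq_zero]
  interval_cases m <;>
    simp [eF_0, eF_1, eF_2, eF_3, eF_4, eF_5, eF_6, eF_7, eF_8, eF_9, eF_10, eF_11, eF_12, eF_13, eF_14, eF_15, eF_16, eF_17, eF_18, eF_19, eF_20, Epp, coeff_C_mul, coeff_X_pow, PowerSeries.coeff_X, coeff_one] <;> norm_num
lemma d4 : (X : PowerSeries ℚ) ^ 21 ∣ C (1 / 2) * (PowerSeries.mk fun n => (n : ℚ) * eF n) - Ehp := by
  rw [X_pow_dvd_iff]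
  intro m hm
  rw [map_sub, coeff_C_mul, coeff_mk, sub_eq_zero]
  interval_cases m <;>
    simp [eF_0, eF_1, eF_2, eF_3, eF_4, eF_5, eF_6, eF_7, eF_8, eF_9, eF_10, eF_11, eF_12, eF_13, eF_14, eF_15, eF_16, eF_17, eF_18, eF_19, eF_20, Ehp, coeff_C_mul, coeff_X_pow, PowerSeries.coeff_X, coeff_one] <;> norm_num

lemma Rc_0 : coeff 0 Rc = 0 := by
  simp [Rc, coeff_C_mul, coeff_X_pow, PowerSeries.coeff_X]
lemma Rc_1 : coeff 1 Rc = (-20) := by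
  simp [Rc, coeff_C_mul, coeff_X_pow, PowerSeries.coeff_X]
lemma Rc_2 : coeff 2 Rc = 0 := by
  simp [Rc, coeff_C_mul, coeff_X_pow, PowerSeries.coeff_X]
lemma Rc_3 : coeff 3 Rc = 0 := by
  simp [Rc, coeff_C_mul, coeff_X_pow, PowerSeries.coeff_X]
lemma Rc_4 : coeff 4 Rc = (-608) := by
  simp [Rc, coeff_C_mul, coeff_X_pow, PowerSeries.coeff_X]
lemma Rc_5 : coeff 5 Rc = 3744 := by
  simp [Rc, coeff_C_mul, coeff_X_pow, PowerSeries.coeff_X]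
lemma Rc_6 : coeff 6 Rc = 0 := by
  simp [Rc, coeff_C_mul, coeff_X_pow, PowerSeries.coeff_X]
lemma Rc_7 : coeff 7 Rc = 0 := by
  simp [Rc, coeff_C_mul, coeff_X_pow, PowerSeries.coeff_X]
lemma Rc_8 : coeff 8 Rc = (-536256) := by
  simp [Rc, coeff_C_mul, coeff_X_pow, PowerSeries.coeff_X]
lemma Rc_9 : coeff 9 Rc = 1719900 := by
  simp [Rc, coeff_C_mul, coeff_X_pow, PowerSeries.coeff_X]
lemma Rc_10 : coeff 10 Rc = 0 := by
  simp [Rc, coeff_C_mul, coeff_X_pow, PowerSeries.coeff_X]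
lemma Rc_11 : coeff 11 Rc = 0 := by
  simp [Rc, coeff_C_mul, coeff_X_pow, PowerSeries.coeff_X]
lemma Rc_12 : coeff 12 Rc = (-34145280) := by
  simp [Rc, coeff_C_mul, coeff_X_pow, PowerSeries.coeff_X]
lemma Rc_13 : coeff 13 Rc = 81923744 := by
  simp [Rc, coeff_C_mul, coeff_X_pow, PowerSeries.coeff_X]
lemma Rc_14 : coeff 14 Rc = 0 := by
  simp [Rc, coeff_C_mul, coeff_X_pow, PowerSeries.coeff_X]
lemma Rc_15 : coeff 15 Rc = 0 := by
  simp [Rc, coeff_C_mul, coeff_X_pow, PowerSeries.coeff_X]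
lemma Rc_16 : coeff 16 Rc = (-886609920) := by
  simp [Rc, coeff_C_mul, coeff_X_pow, PowerSeries.coeff_X]
lemma Rc_17 : coeff 17 Rc = 1839022920 := by
  simp [Rc, coeff_C_mul, coeff_X_pow, PowerSeries.coeff_X]
lemma Rc_18 : coeff 18 Rc = 0 := by
  simp [Rc, coeff_C_mul, coeff_X_pow, PowerSeries.coeff_X]
lemma Rc_19 : coeff 19 Rc = 0 := by
  simp [Rc, coeff_C_mul, coeff_X_pow, PowerSeries.coeff_X]
lemma Rc_20 : coeff 20 Rc = (-14178776256) := by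
  simp [Rc, coeff_C_mul, coeff_X_pow, PowerSeries.coeff_X]



lemma binom24 (y : PowerSeries ℚ) : (1 - y) ^ 24 =
    1 - 24 * y + 276 * y ^ 2 - 2024 * y ^ 3 + 10626 * y ^ 4 - 42504 * y ^ 5 +
      y ^ 6 * (134596 - 346104 * y + 735471 * y ^ 2 - 1307504 * y ^ 3 + 1961256 * y ^ 4 - 2496144 * y ^ 5 + 2704156 * y ^ 6 - 2496144 * y ^ 7 + 1961256 * y ^ 8 - 1307504 * y ^ 9 + 735471 * y ^ 10 - 346104 * y ^ 11 + 134596 * y ^ 12 - 42504 * y ^ 13 + 10626 * y ^ 14 - 2024 * y ^ 15 + 276 * y ^ 16 - 24 * y ^ 17 + y ^ 18) := by ring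
lemma ftr1 : ((1 : PowerSeries ℚ) - X ^ 4) ^ 24 = (1 - 24 * X ^ 4 + 276 * X ^ 8 - 2024 * X ^ 12 + 10626 * X ^ 16 - 42504 * X ^ 20) + X ^ 21 * (134596 * X ^ 3 - 346104 * X ^ 7 + 735471 * X ^ 11 - 1307504 * X ^ 15 + 1961256 * X ^ 19 - 2496144 * X ^ 23 + 2704156 * X ^ 27 - 2496144 * X ^ 31 + 1961256 * X ^ 35 - 1307504 * X ^ 39 + 735471 * X ^ 43 - 346104 * X ^ 47 + 134596 * X ^ 51 - 42504 * X ^ 55 + 10626 * X ^ 59 - 2024 * X ^ 63 + 276 * X ^ 67 - 24 * X ^ 71 + X ^ 75) := by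
  rw [binom24 ((X : PowerSeries ℚ) ^ 4)]
  ring
lemma ftr2 : ((1 : PowerSeries ℚ) - X ^ 8) ^ 24 = (1 - 24 * X ^ 8 + 276 * X ^ 16) + X ^ 21 * (-2024 * X ^ 3 + 10626 * X ^ 11 - 42504 * X ^ 19 + 134596 * X ^ 27 - 346104 * X ^ 35 + 735471 * X ^ 43 - 1307504 * X ^ 51 + 1961256 * X ^ 59 - 2496144 * X ^ 67 + 2704156 * X ^ 75 - 2496144 * X ^ 83 + 1961256 * X ^ 91 - 1307504 * X ^ 99 + 735471 * X ^ 107 - 346104 * X ^ 115 + 134596 * X ^ 123 - 42504 * X ^ 131 + 10626 * X ^ 139 - 2024 * X ^ 147 + 276 * X ^ 155 - 24 * X ^ 163 + X ^ 171) := by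
  rw [binom24 ((X : PowerSeries ℚ) ^ 8)]
  ring
lemma ftr3 : ((1 : PowerSeries ℚ) - X ^ 12) ^ 24 = (1 - 24 * X ^ 12) + X ^ 21 * (276 * X ^ 3 - 2024 * X ^ 15 + 10626 * X ^ 27 - 42504 * X ^ 39 + 134596 * X ^ 51 - 346104 * X ^ 63 + 735471 * X ^ 75 - 1307504 * X ^ 87 + 1961256 * X ^ 99 - 2496144 * X ^ 111 + 2704156 * X ^ 123 - 2496144 * X ^ 135 + 1961256 * X ^ 147 - 1307504 * X ^ 159 + 735471 * X ^ 171 - 346104 * X ^ 183 + 134596 * X ^ 195 - 42504 * X ^ 207 + 10626 * X ^ 219 - 2024 * X ^ 231 + 276 * X ^ 243 - 24 * X ^ 255 + X ^ 267) := by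
  rw [binom24 ((X : PowerSeries ℚ) ^ 12)]
  ring
lemma ftr4 : ((1 : PowerSeries ℚ) - X ^ 16) ^ 24 = (1 - 24 * X ^ 16) + X ^ 21 * (276 * X ^ 11 - 2024 * X ^ 27 + 10626 * X ^ 43 - 42504 * X ^ 59 + 134596 * X ^ 75 - 346104 * X ^ 91 + 735471 * X ^ 107 - 1307504 * X ^ 123 + 1961256 * X ^ 139 - 2496144 * X ^ 155 + 2704156 * X ^ 171 - 2496144 * X ^ 187 + 1961256 * X ^ 203 - 1307504 * X ^ 219 + 735471 * X ^ 235 - 346104 * X ^ 251 + 134596 * X ^ 267 - 42504 * X ^ 283 + 10626 * X ^ 299 - 2024 * X ^ 315 + 276 * X ^ 331 - 24 * X ^ 347 + X ^ 363) := by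
  rw [binom24 ((X : PowerSeries ℚ) ^ 16)]
  ring
lemma ftr5 : ((1 : PowerSeries ℚ) - X ^ 20) ^ 24 = (1 - 24 * X ^ 20) + X ^ 21 * (276 * X ^ 19 - 2024 * X ^ 39 + 10626 * X ^ 59 - 42504 * X ^ 79 + 134596 * X ^ 99 - 346104 * X ^ 119 + 735471 * X ^ 139 - 1307504 * X ^ 159 + 1961256 * X ^ 179 - 2496144 * X ^ 199 + 2704156 * X ^ 219 - 2496144 * X ^ 239 + 1961256 * X ^ 259 - 1307504 * X ^ 279 + 735471 * X ^ 299 - 346104 * X ^ 319 + 134596 * X ^ 339 - 42504 * X ^ 359 + 10626 * X ^ 379 - 2024 * X ^ 399 + 276 * X ^ 419 - 24 * X ^ 439 + X ^ 459) := by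
  rw [binom24 ((X : PowerSeries ℚ) ^ 20)]
  ring
lemma dvd_step {P A f T W A' B : PowerSeries ℚ} (h : (X : PowerSeries ℚ) ^ 21 ∣ P - A)
    (hf : f = T + X ^ 21 * W) (hid : A * T = A' + X ^ 21 * B) :
    (X : PowerSeries ℚ) ^ 21 ∣ P * f - A' := by
  have e : P * f - A' = (P - A) * f + X ^ 21 * (A * W) + (A * T - A') := by rw [hf]; ring
  rw [e]
  exact dvd_add (dvd_add (h.mul_right f) (dvd_mul_right _ _)) ⟨B, by rw [hid]; ring⟩
lemma idA2 : ((1 - 24 * X ^ 4 + 276 * X ^ 8 - 2024 * X ^ 12 + 10626 * X ^ 16 - 42504 * X ^ 20) : PowerSeries ℚ) * (1 - 24 * X ^ 8 + 276 * X ^ 16) = (1 - 24 * X ^ 4 + 252 * X ^ 8 - 1448 * X ^ 12 + 4278 * X ^ 16 - 552 * X ^ 20) + X ^ 21 * (-178848 * X ^ 3 + 461472 * X ^ 7 + 2932776 * X ^ 11 - 11731104 * X ^ 15) := by ring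
lemma idA3 : ((1 - 24 * X ^ 4 + 252 * X ^ 8 - 1448 * X ^ 12 + 4278 * X ^ 16 - 552 * X ^ 20) : PowerSeries ℚ) * (1 - 24 * X ^ 12) = (1 - 24 * X ^ 4 + 252 * X ^ 8 - 1472 * X ^ 12 + 4854 * X ^ 16 - 6600 * X ^ 20) + X ^ 21 * (34752 * X ^ 3 - 102672 * X ^ 7 + 13248 * X ^ 11) := by ring
lemma idA4 : ((1 - 24 * X ^ 4 + 252 * X ^ 8 - 1472 * X ^ 12 + 4854 * X ^ 16 - 6600 * X ^ 20) : PowerSeries ℚ) * (1 - 24 * X ^ 16) = (1 - 24 * X ^ 4 + 252 * X ^ 8 - 1472 * X ^ 12 + 4830 * X ^ 16 - 6024 * X ^ 20) + X ^ 21 * (-6048 * X ^ 3 + 35328 * X ^ 7 - 116496 * X ^ 11 + 158400 * X ^ 15) := by ring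
lemma idA5 : ((1 - 24 * X ^ 4 + 252 * X ^ 8 - 1472 * X ^ 12 + 4830 * X ^ 16 - 6024 * X ^ 20) : PowerSeries ℚ) * (1 - 24 * X ^ 20) = (1 - 24 * X ^ 4 + 252 * X ^ 8 - 1472 * X ^ 12 + 4830 * X ^ 16 - 6048 * X ^ 20) + X ^ 21 * (576 * X ^ 3 - 6048 * X ^ 7 + 35328 * X ^ 11 - 115920 * X ^ 15 + 144576 * X ^ 19) := by ring
lemma d6 : (X : PowerSeries ℚ) ^ 21 ∣ (∏ i ∈ Finset.range 5, pf i) - Qpolyp := by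
  have hprod : (∏ i ∈ Finset.range 5, pf i) =
      (1 - X ^ 4 : PowerSeries ℚ) ^ 24 * (1 - X ^ 8) ^ 24 * (1 - X ^ 12) ^ 24 *
        (1 - X ^ 16) ^ 24 * (1 - X ^ 20) ^ 24 := by
    rw [Finset.prod_range_succ, Finset.prod_range_succ, Finset.prod_range_succ,
      Finset.prod_range_succ, Finset.prod_range_one, pf, pf, pf, pf, pf]
  have h1 : (X : PowerSeries ℚ) ^ 21 ∣ (1 - X ^ 4 : PowerSeries ℚ) ^ 24 - (1 - 24 * X ^ 4 + 276 * X ^ 8 - 2024 * X ^ 12 + 10626 * X ^ 16 - 42504 * X ^ 20) :=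
    ⟨(134596 * X ^ 3 - 346104 * X ^ 7 + 735471 * X ^ 11 - 1307504 * X ^ 15 + 1961256 * X ^ 19 - 2496144 * X ^ 23 + 2704156 * X ^ 27 - 2496144 * X ^ 31 + 1961256 * X ^ 35 - 1307504 * X ^ 39 + 735471 * X ^ 43 - 346104 * X ^ 47 + 134596 * X ^ 51 - 42504 * X ^ 55 + 10626 * X ^ 59 - 2024 * X ^ 63 + 276 * X ^ 67 - 24 * X ^ 71 + X ^ 75), by rw [ftr1]; ring⟩
  have h2 := dvd_step h1 ftr2 idA2
  have h3 := dvd_step h2 ftr3 idA3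
  have h4 := dvd_step h3 ftr4 idA4
  have h5 := dvd_step h4 ftr5 idA5
  have hQ : Qpolyp = (1 - 24 * X ^ 4 + 252 * X ^ 8 - 1472 * X ^ 12 + 4830 * X ^ 16 - 6048 * X ^ 20) := by
    rw [Qpolyp]; simp only [map_ofNat]
  rw [hprod, hQ]
  exact h5
lemma d7 : (X : PowerSeries ℚ) ^ 21 ∣ Tp * Ehp - 10 * Epp * Tpp - Rc * Qpolyp := by
  refine ⟨(26878279680 - 133560572544 * X ^ 3 - 339754500488 * X ^ 4 + 2431240785792 * X ^ 7 + 2404252052160 * X ^ 8 - 16774263588480 * X ^ 11 - 8387005899888 * X ^ 12 + 63275960099520 * X ^ 15 + 11122410620160 * X ^ 16 - 85753238796288 * X ^ 19), ?_⟩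
  rw [Tp, Ehp, Epp, Tpp, Rc, Qpolyp]
  simp only [map_ofNat]
  ring



-- ### assembling the numerator and the final coefficient formula
def N0 : PowerSeries ℚ :=
  C (1 / 2) * PowerSeries.mk thetaF * (PowerSeries.mk fun n => (n : ℚ) * eF n) -
    10 * PowerSeries.mk eF * (PowerSeries.mk fun n => (n : ℚ) * thetaF n)

def Mser : PowerSeries ℚ := C (-(1 / 20)) * (N0 * QP⁻¹)

def Kser : PowerSeries ℚ := C (-(1 / 20)) * (608 * PowerSeries.mk thetaF)

lemma Dop_theta : Dop (toLaurent Theta) =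
    toLaurent (PowerSeries.mk fun n => (n : ℚ) * thetaF n) := by
  rw [theta_eq, DopT]
  congr 1
  ext n
  rw [coeff_mk, coeff_mk, coeff_mk]

lemma Dop_E : Dop (toLaurent Eseries) =
    toLaurent (PowerSeries.mk fun n => (n : ℚ) * eF n) := by
  rw [Es_eq, DopT]
  congr 1
  ext n
  rw [coeff_mk, coeff_mk, coeff_mk]

lemma fThree_eq : fThree = toLaurent Mser * HahnSeries.single (-4 : ℤ) (1 : ℚ) +
    toLaurent Kser := by
  rw [fThree, Dop_theta, Dop_E, theta_eq, Es_eq, P_inv_eq, scalar_half, scalar_m20,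
    show (10 : LaurentSeries ℚ) = toLaurent 10 from (map_ofNat toLaurent 10).symm,
    show (608 : LaurentSeries ℚ) = toLaurent 608 from (map_ofNat toLaurent 608).symm]
  simp only [Mser, Kser, N0, map_mul, map_sub]
  ring

lemma coeff_fThree (n : ℤ) :
    fThree.coeff n = (toLaurent Mser).coeff (n + 4) + (toLaurent Kser).coeff n := by
  rw [fThree_eq, HahnSeries.coeff_add]
  congr 1
  have h := HahnSeries.coeff_mul_single_add (x := toLaurent Mser) (r := (1 : ℚ))
    (a := n + 4) (b := (-4 : ℤ))
  rw [show n + 4 + (-4 : ℤ) = n by ring] at h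
  rw [h, mul_one]

lemma d5 : (X : PowerSeries ℚ) ^ 21 ∣ (∏ i ∈ Finset.range 5, pf i) - QP := by
  rw [X_pow_dvd_iff]
  intro m hm
  rw [map_sub, sub_eq_zero]
  have hQ : coeff m QP = coeff m (∏ i ∈ Finset.range (m + 1), pf i) := coeff_mk m _
  by_cases h : m + 1 ≤ 5
  · rw [hQ]
    exact stab m (m + 1) (by omega) (Finset.range 5) (Finset.range_subset_range.mpr h)
  · rw [hQ]
    exact (stab m 5 (by omega) (Finset.range (m + 1)) (Finset.range_subset_range.mpr (by omega))).symm

lemma dvdN : (X : PowerSeries ℚ) ^ 21 ∣ N0 - Rc * QP := by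
  have e : N0 - Rc * QP =
      PowerSeries.mk thetaF * (C (1 / 2) * (PowerSeries.mk fun n => (n : ℚ) * eF n) - Ehp) +
        (PowerSeries.mk thetaF - Tp) * Ehp -
        (10 * PowerSeries.mk eF * ((PowerSeries.mk fun n => (n : ℚ) * thetaF n) - Tpp) +
          10 * (PowerSeries.mk eF - Epp) * Tpp) +
        (Tp * Ehp - 10 * Epp * Tpp - Rc * Qpolyp) +
        (Rc * (Qpolyp - (∏ i ∈ Finset.range 5, pf i)) +
          Rc * ((∏ i ∈ Finset.range 5, pf i) - QP)) := by
    simp only [N0]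
    ring
  rw [e]
  refine dvd_add (dvd_add (dvd_sub (dvd_add ?_ ?_) (dvd_add ?_ ?_)) d7) (dvd_add ?_ ?_)
  · exact d4.mul_left _
  · exact d1.mul_right _
  · exact d2.mul_left _
  · exact (d3.mul_left 10).mul_right _
  · exact (dvd_sub_comm.mp d6).mul_left _
  · exact d5.mul_left _

lemma hGR (j : ℕ) (hj : j < 21) : coeff j (N0 * QP⁻¹) = coeff j Rc := by
  have hfact : N0 * QP⁻¹ - Rc = (N0 - Rc * QP) * QP⁻¹ := by
    rw [sub_mul, mul_assoc, QP_mul_inv, mul_one]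
  have hd : (X : PowerSeries ℚ) ^ 21 ∣ N0 * QP⁻¹ - Rc := by
    rw [hfact]
    exact dvdN.mul_right _
  have h0 := X_pow_dvd_iff.mp hd j hj
  rw [map_sub, sub_eq_zero] at h0
  exact h0

lemma coeff_M (j : ℕ) (hj : j < 21) : coeff j Mser = -(1 / 20) * coeff j Rc := by
  simp only [Mser]
  rw [coeff_C_mul, hGR j hj]

lemma coeff_K (j : ℕ) : coeff j Kser = -(1 / 20) * (608 * thetaF j) := by
  simp only [Kser]
  rw [coeff_C_mul, show (608 : PowerSeries ℚ) = C 608 from (map_ofNat (C (R := ℚ)) 608).symm,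
    coeff_C_mul, coeff_mk]

lemma fv_m4 : fThree.coeff (-4) = 0 := by
  rw [coeff_fThree]
  rw [show ((-4 : ℤ) + 4) = ((0 : ℕ) : ℤ) by norm_num, toLaurent_coeff_nonneg,
    coeff_M 0 (by norm_num), Rc_0]
  rw [toLaurent_coeff_neg _ _ (by norm_num)]
  norm_num

lemma fv_m3 : fThree.coeff (-3) = 1 := by
  rw [coeff_fThree]
  rw [show ((-3 : ℤ) + 4) = ((1 : ℕ) : ℤ) by norm_num, toLaurent_coeff_nonneg,
    coeff_M 1 (by norm_num), Rc_1]
  rw [toLaurent_coeff_neg _ _ (by norm_num)]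
  norm_num

lemma fv_m2 : fThree.coeff (-2) = 0 := by
  rw [coeff_fThree]
  rw [show ((-2 : ℤ) + 4) = ((2 : ℕ) : ℤ) by norm_num, toLaurent_coeff_nonneg,
    coeff_M 2 (by norm_num), Rc_2]
  rw [toLaurent_coeff_neg _ _ (by norm_num)]
  norm_num

lemma fv_m1 : fThree.coeff (-1) = 0 := by
  rw [coeff_fThree]
  rw [show ((-1 : ℤ) + 4) = ((3 : ℕ) : ℤ) by norm_num, toLaurent_coeff_nonneg,
    coeff_M 3 (by norm_num), Rc_3]
  rw [toLaurent_coeff_neg _ _ (by norm_num)]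
  norm_num

lemma fv_0 : fThree.coeff (0) = 0 := by
  rw [coeff_fThree]
  rw [show ((0 : ℤ) + 4) = ((4 : ℕ) : ℤ) by norm_num, toLaurent_coeff_nonneg,
    coeff_M 4 (by norm_num), Rc_4]
  rw [show ((0 : ℤ)) = ((0 : ℕ) : ℤ) by norm_num, toLaurent_coeff_nonneg,
    coeff_K, thetaF_0]
  norm_num

lemma fv_1 : fThree.coeff (1) = -248 := by
  rw [coeff_fThree]
  rw [show ((1 : ℤ) + 4) = ((5 : ℕ) : ℤ) by norm_num, toLaurent_coeff_nonneg,
    coeff_M 5 (by norm_num), Rc_5]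
  rw [show ((1 : ℤ)) = ((1 : ℕ) : ℤ) by norm_num, toLaurent_coeff_nonneg,
    coeff_K, thetaF_1]
  norm_num

lemma fv_2 : fThree.coeff (2) = 0 := by
  rw [coeff_fThree]
  rw [show ((2 : ℤ) + 4) = ((6 : ℕ) : ℤ) by norm_num, toLaurent_coeff_nonneg,
    coeff_M 6 (by norm_num), Rc_6]
  rw [show ((2 : ℤ)) = ((2 : ℕ) : ℤ) by norm_num, toLaurent_coeff_nonneg,
    coeff_K, thetaF_2]
  norm_num

lemma fv_3 : fThree.coeff (3) = 0 := by
  rw [coeff_fThree]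
  rw [show ((3 : ℤ) + 4) = ((7 : ℕ) : ℤ) by norm_num, toLaurent_coeff_nonneg,
    coeff_M 7 (by norm_num), Rc_7]
  rw [show ((3 : ℤ)) = ((3 : ℕ) : ℤ) by norm_num, toLaurent_coeff_nonneg,
    coeff_K, thetaF_3]
  norm_num

lemma fv_4 : fThree.coeff (4) = 26752 := by
  rw [coeff_fThree]
  rw [show ((4 : ℤ) + 4) = ((8 : ℕ) : ℤ) by norm_num, toLaurent_coeff_nonneg,
    coeff_M 8 (by norm_num), Rc_8]
  rw [show ((4 : ℤ)) = ((4 : ℕ) : ℤ) by norm_num, toLaurent_coeff_nonneg,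
    coeff_K, thetaF_4]
  norm_num

lemma fv_5 : fThree.coeff (5) = -85995 := by
  rw [coeff_fThree]
  rw [show ((5 : ℤ) + 4) = ((9 : ℕ) : ℤ) by norm_num, toLaurent_coeff_nonneg,
    coeff_M 9 (by norm_num), Rc_9]
  rw [show ((5 : ℤ)) = ((5 : ℕ) : ℤ) by norm_num, toLaurent_coeff_nonneg,
    coeff_K, thetaF_5]
  norm_num

lemma fv_6 : fThree.coeff (6) = 0 := by
  rw [coeff_fThree]
  rw [show ((6 : ℤ) + 4) = ((10 : ℕ) : ℤ) by norm_num, toLaurent_coeff_nonneg,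
    coeff_M 10 (by norm_num), Rc_10]
  rw [show ((6 : ℤ)) = ((6 : ℕ) : ℤ) by norm_num, toLaurent_coeff_nonneg,
    coeff_K, thetaF_6]
  norm_num

lemma fv_7 : fThree.coeff (7) = 0 := by
  rw [coeff_fThree]
  rw [show ((7 : ℤ) + 4) = ((11 : ℕ) : ℤ) by norm_num, toLaurent_coeff_nonneg,
    coeff_M 11 (by norm_num), Rc_11]
  rw [show ((7 : ℤ)) = ((7 : ℕ) : ℤ) by norm_num, toLaurent_coeff_nonneg,
    coeff_K, thetaF_7]
  norm_num

lemma fv_8 : fThree.coeff (8) = 1707264 := by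
  rw [coeff_fThree]
  rw [show ((8 : ℤ) + 4) = ((12 : ℕ) : ℤ) by norm_num, toLaurent_coeff_nonneg,
    coeff_M 12 (by norm_num), Rc_12]
  rw [show ((8 : ℤ)) = ((8 : ℕ) : ℤ) by norm_num, toLaurent_coeff_nonneg,
    coeff_K, thetaF_8]
  norm_num

lemma fv_9 : fThree.coeff (9) = -4096248 := by
  rw [coeff_fThree]
  rw [show ((9 : ℤ) + 4) = ((13 : ℕ) : ℤ) by norm_num, toLaurent_coeff_nonneg,
    coeff_M 13 (by norm_num), Rc_13]
  rw [show ((9 : ℤ)) = ((9 : ℕ) : ℤ) by norm_num, toLaurent_coeff_nonneg,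
    coeff_K, thetaF_9]
  norm_num

lemma fv_10 : fThree.coeff (10) = 0 := by
  rw [coeff_fThree]
  rw [show ((10 : ℤ) + 4) = ((14 : ℕ) : ℤ) by norm_num, toLaurent_coeff_nonneg,
    coeff_M 14 (by norm_num), Rc_14]
  rw [show ((10 : ℤ)) = ((10 : ℕ) : ℤ) by norm_num, toLaurent_coeff_nonneg,
    coeff_K, thetaF_10]
  norm_num

lemma fv_11 : fThree.coeff (11) = 0 := by
  rw [coeff_fThree]
  rw [show ((11 : ℤ) + 4) = ((15 : ℕ) : ℤ) by norm_num, toLaurent_coeff_nonneg,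
    coeff_M 15 (by norm_num), Rc_15]
  rw [show ((11 : ℤ)) = ((11 : ℕ) : ℤ) by norm_num, toLaurent_coeff_nonneg,
    coeff_K, thetaF_11]
  norm_num

lemma fv_12 : fThree.coeff (12) = 44330496 := by
  rw [coeff_fThree]
  rw [show ((12 : ℤ) + 4) = ((16 : ℕ) : ℤ) by norm_num, toLaurent_coeff_nonneg,
    coeff_M 16 (by norm_num), Rc_16]
  rw [show ((12 : ℤ)) = ((12 : ℕ) : ℤ) by norm_num, toLaurent_coeff_nonneg,
    coeff_K, thetaF_12]
  norm_num

lemma fv_13 : fThree.coeff (13) = -91951146 := by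
  rw [coeff_fThree]
  rw [show ((13 : ℤ) + 4) = ((17 : ℕ) : ℤ) by norm_num, toLaurent_coeff_nonneg,
    coeff_M 17 (by norm_num), Rc_17]
  rw [show ((13 : ℤ)) = ((13 : ℕ) : ℤ) by norm_num, toLaurent_coeff_nonneg,
    coeff_K, thetaF_13]
  norm_num

lemma fv_14 : fThree.coeff (14) = 0 := by
  rw [coeff_fThree]
  rw [show ((14 : ℤ) + 4) = ((18 : ℕ) : ℤ) by norm_num, toLaurent_coeff_nonneg,
    coeff_M 18 (by norm_num), Rc_18]
  rw [show ((14 : ℤ)) = ((14 : ℕ) : ℤ) by norm_num, toLaurent_coeff_nonneg,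
    coeff_K, thetaF_14]
  norm_num

lemma fv_15 : fThree.coeff (15) = 0 := by
  rw [coeff_fThree]
  rw [show ((15 : ℤ) + 4) = ((19 : ℕ) : ℤ) by norm_num, toLaurent_coeff_nonneg,
    coeff_M 19 (by norm_num), Rc_19]
  rw [show ((15 : ℤ)) = ((15 : ℕ) : ℤ) by norm_num, toLaurent_coeff_nonneg,
    coeff_K, thetaF_15]
  norm_num

lemma fv_16 : fThree.coeff (16) = 708938752 := by
  rw [coeff_fThree]
  rw [show ((16 : ℤ) + 4) = ((20 : ℕ) : ℤ) by norm_num, toLaurent_coeff_nonneg,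
    coeff_M 20 (by norm_num), Rc_20]
  rw [show ((16 : ℤ)) = ((16 : ℕ) : ℤ) by norm_num, toLaurent_coeff_nonneg,
    coeff_K, thetaF_16]
  norm_num


/-- `P` is invertible in the field of formal Laurent series, and the Laurent series
`f₃` has the stated Fourier coefficients: its coefficient of `Xⁿ` vanishes for
`n < -3` and for `-3 ≤ n ≤ 16` with `n ≡ 2, 3 (mod 4)`, while its coefficients of
`X⁻³, X⁰, X¹, X⁴, X⁵, X⁸, X⁹, X¹², X¹³, X¹⁶` are
`1, 0, -248, 26752, -85995, 1707264, -4096248, 44330496, -91951146, 708938752`. -/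
theorem fThree_coefficients :
    IsUnit (toLaurent Pseries) ∧
    (∀ n : ℤ, n < -3 → fThree.coeff n = 0) ∧
    (∀ n : ℤ, -3 ≤ n → n ≤ 16 → (n % 4 = 2 ∨ n % 4 = 3) → fThree.coeff n = 0) ∧
    fThree.coeff (-3) = 1 ∧
    fThree.coeff 0 = 0 ∧
    fThree.coeff 1 = -248 ∧
    fThree.coeff 4 = 26752 ∧
    fThree.coeff 5 = -85995 ∧
    fThree.coeff 8 = 1707264 ∧
    fThree.coeff 9 = -4096248 ∧
    fThree.coeff 12 = 44330496 ∧
    fThree.coeff 13 = -91951146 ∧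
    fThree.coeff 16 = 708938752 := by
  refine ⟨P_isUnit, ?_, ?_, fv_m3, fv_0, fv_1, fv_4, fv_5, fv_8, fv_9, fv_12, fv_13, fv_16⟩
  · intro n hn
    by_cases h4 : n = -4
    · subst h4
      exact fv_m4
    · rw [coeff_fThree, toLaurent_coeff_neg _ _ (by omega), toLaurent_coeff_neg _ _ (by omega),
        add_zero]
  · intro n h1 h2 h3
    interval_cases n
    · omega
    · exact fv_m2
    · exact fv_m1
    · omega
    · omega
    · exact fv_2
    · exact fv_3
    · omega
    · omega
    · exact fv_6
    · exact fv_7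
    · omega
    · omega
    · exact fv_10
    · exact fv_11
    · omega
    · omega
    · exact fv_14
    · exact fv_15
    · omega

end
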